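/- Let M be a torsion-free abelian group with a semi-norm ‖·‖ satisfying ‖n·u‖ = |n|‖u‖ for integers n. Then there is a unique semi-norm on ℚ ⊗_ℤ M making the natural injection M → ℚ ⊗_ℤ M, m ↦ 1⊗m, an isometry; explicitly, ‖∑ (a_i/b_i) ⊗ m_i‖ = c^{-1}‖∑ (a_i c / b_i) m_i‖_M where c = b_1 b_2 ⋯ b_n. Moreover, the induced restriction map (ℚ ⊗_ℤ M)' → M' between dual spaces is an isometric isomorphism. -/

import Mathlib

open TensorProduct

section RSQAux
variable {M : Type*} [AddCommGroup M]

noncomputable def rsq_ρ : ℚ ≃ₐ[ℤ] Localization (nonZeroDivisors ℤ) :=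
  IsLocalization.algEquiv (nonZeroDivisors ℤ) ℚ (Localization (nonZeroDivisors ℤ))

noncomputable def rsq_φ : ℚ ⊗[ℤ] M →+ LocalizedModule (nonZeroDivisors ℤ) M :=
  TensorProduct.liftAddHom
    { toFun := fun q =>
        { toFun := fun m => rsq_ρ q • LocalizedModule.mk m 1
          map_zero' := by rw [LocalizedModule.zero_mk, smul_zero]
          map_add' := fun m m' => by
            rw [← smul_add, LocalizedModule.mk_add_mk, one_mul, one_smul, one_smul] }
      map_zero' := by ext m; simp
      map_add' := fun q q' => by ext m; simp [add_smul] }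
    (by
      intro n q m
      simp only [AddMonoidHom.coe_mk, ZeroHom.coe_mk]
      have h1 : rsq_ρ (n • q) = (Localization.mk n 1) * rsq_ρ q := by
        rw [Localization.mk_one_eq_algebraMap, zsmul_eq_mul, map_mul]
        congr 1
        rw [show ((n:ℚ)) = algebraMap ℤ ℚ n from rfl, AlgEquiv.commutes]
      rw [h1, mul_comm, mul_smul, LocalizedModule.mk_smul_mk, one_mul])

lemma rsq_φ_tmul (q : ℚ) (m : M) :
    rsq_φ (q ⊗ₜ[ℤ] m) = rsq_ρ q • LocalizedModule.mk m 1 := by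
  simp [rsq_φ]

lemma rsq_inj (htf : ∀ (n : ℤ) (m : M), n ≠ 0 → n • m = 0 → m = 0)
    {m : M} (h : (1:ℚ) ⊗ₜ[ℤ] m = 0) : m = 0 := by
  have h2 : rsq_φ ((1:ℚ) ⊗ₜ[ℤ] m) = 0 := by rw [h, map_zero]
  rw [rsq_φ_tmul, map_one, one_smul] at h2
  have h3 : LocalizedModule.mk m (1 : nonZeroDivisors ℤ) = LocalizedModule.mk (0 : M) 1 := by
    rw [LocalizedModule.zero_mk]; exact h2
  rw [LocalizedModule.mk_eq] at h3
  obtain ⟨u, hu⟩ := h3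
  simp only [one_smul, smul_zero] at hu
  exact htf u m (nonZeroDivisors.coe_ne_zero u) hu

lemma rsq_tmul_rep (q : ℚ) (m : M) :
    ((q.den : ℕ) : ℤ) • (q ⊗ₜ[ℤ] m) = (1:ℚ) ⊗ₜ[ℤ] (q.num • m) := by
  rw [smul_tmul', ← smul_tmul]
  congr 1
  rw [zsmul_eq_mul, zsmul_eq_mul]
  push_cast
  rw [mul_one, mul_comm]
  exact_mod_cast (Rat.num_div_den q ▸
    (div_mul_cancel₀ (q.num : ℚ) (by exact_mod_cast q.den_nz)).symm).symm

lemma rsq_add_rep {x y : ℚ ⊗[ℤ] M} {n₁ n₂ : ℕ} {m₁ m₂ : M}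
    (e₁ : (n₁:ℤ) • x = (1:ℚ) ⊗ₜ[ℤ] m₁) (e₂ : (n₂:ℤ) • y = (1:ℚ) ⊗ₜ[ℤ] m₂) :
    ((n₁ * n₂ : ℕ) : ℤ) • (x + y) = (1:ℚ) ⊗ₜ[ℤ] ((n₂:ℤ) • m₁ + (n₁:ℤ) • m₂) := by
  rw [TensorProduct.tmul_add, tmul_smul, tmul_smul, ← e₁, ← e₂, smul_add]
  push_cast
  rw [← mul_smul, ← mul_smul, mul_comm (n₂:ℤ)]

lemma rsq_exists_rep (x : ℚ ⊗[ℤ] M) :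
    ∃ (n : ℕ) (m : M), 0 < n ∧ (n : ℤ) • x = (1:ℚ) ⊗ₜ[ℤ] m := by
  induction x using TensorProduct.induction_on with
  | zero => exact ⟨1, 0, one_pos, by simp [TensorProduct.tmul_zero]⟩
  | tmul q m => exact ⟨q.den, q.num • m, q.pos, rsq_tmul_rep q m⟩
  | add x y hx hy =>
    obtain ⟨n₁, m₁, h₁, e₁⟩ := hx
    obtain ⟨n₂, m₂, h₂, e₂⟩ := hy
    exact ⟨n₁ * n₂, (n₂:ℤ) • m₁ + (n₁:ℤ) • m₂, Nat.mul_pos h₁ h₂, rsq_add_rep e₁ e₂⟩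

lemma rsq_cancel (htf : ∀ (n : ℤ) (m : M), n ≠ 0 → n • m = 0 → m = 0)
    {n₁ n₂ : ℕ} {x : ℚ ⊗[ℤ] M} {m₁ m₂ : M}
    (e₁ : (n₁:ℤ) • x = (1:ℚ) ⊗ₜ[ℤ] m₁) (e₂ : (n₂:ℤ) • x = (1:ℚ) ⊗ₜ[ℤ] m₂) :
    (n₂:ℤ) • m₁ = (n₁:ℤ) • m₂ := by
  have key : (1:ℚ) ⊗ₜ[ℤ] ((n₂:ℤ) • m₁ - (n₁:ℤ) • m₂) = 0 := by
    rw [TensorProduct.tmul_sub, tmul_smul, tmul_smul, ← e₁, ← e₂,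
      ← mul_smul, ← mul_smul, mul_comm, sub_self]
  exact sub_eq_zero.mp (rsq_inj htf key)

end RSQAux

/-- Let `M` be a torsion-free abelian group with a semi-norm `ν`
satisfying `ν (n • u) = |n| ν u` for integers `n`. Then there is a unique semi-norm
on `ℚ ⊗_ℤ M` (i.e. a subadditive, ℤ-homogeneous function) making the natural
injection `m ↦ 1 ⊗ m` an isometry; it is given by the explicit formula
`ν' (q ⊗ m) = |q| ν m` on elementary tensors. Moreover, the induced restriction map
between dual spaces is an isometric isomorphism: every bounded additive functional
`f` on `M` extends uniquely to an additive functional `F` on `ℚ ⊗_ℤ M`, and the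
extension satisfies the same bounds with respect to `ν'`. -/
theorem rationalization_seminorm_unique_and_dual_iso
    {M : Type*} [AddCommGroup M]
    (htf : ∀ (n : ℤ) (m : M), n ≠ 0 → n • m = 0 → m = 0)
    (ν : M → ℝ)
    (hν0 : ∀ m : M, 0 ≤ ν m)
    (hνadd : ∀ u v : M, ν (u + v) ≤ ν u + ν v)
    (hνsmul : ∀ (n : ℤ) (u : M), ν (n • u) = |(n : ℝ)| * ν u) :
    (∃! ν' : ℚ ⊗[ℤ] M → ℝ,
      (∀ u v : ℚ ⊗[ℤ] M, ν' (u + v) ≤ ν' u + ν' v) ∧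
      (∀ (n : ℤ) (u : ℚ ⊗[ℤ] M), ν' (n • u) = |(n : ℝ)| * ν' u) ∧
      (∀ m : M, ν' ((1 : ℚ) ⊗ₜ[ℤ] m) = ν m)) ∧
    (∀ ν' : ℚ ⊗[ℤ] M → ℝ,
      ((∀ u v : ℚ ⊗[ℤ] M, ν' (u + v) ≤ ν' u + ν' v) ∧
       (∀ (n : ℤ) (u : ℚ ⊗[ℤ] M), ν' (n • u) = |(n : ℝ)| * ν' u) ∧
       (∀ m : M, ν' ((1 : ℚ) ⊗ₜ[ℤ] m) = ν m)) →
      -- explicit formula on elementary tensors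
      (∀ (q : ℚ) (m : M), ν' (q ⊗ₜ[ℤ] m) = |(q : ℝ)| * ν m) ∧
      -- the restriction map on duals is an isometric isomorphism
      (∀ (f : M →+ ℝ) (c : ℝ), 0 ≤ c → (∀ m : M, |f m| ≤ c * ν m) →
        ∃ F : ℚ ⊗[ℤ] M →+ ℝ,
          (∀ m : M, F ((1 : ℚ) ⊗ₜ[ℤ] m) = f m) ∧
          (∀ x : ℚ ⊗[ℤ] M, |F x| ≤ c * ν' x) ∧
          (∀ F' : ℚ ⊗[ℤ] M →+ ℝ,
            (∀ m : M, F' ((1 : ℚ) ⊗ₜ[ℤ] m) = f m) → F' = F))) := by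
  classical
  obtain ⟨nn, mm, hnn, hmm⟩ :
      ∃ (nn : ℚ ⊗[ℤ] M → ℕ) (mm : ℚ ⊗[ℤ] M → M),
        (∀ x, 0 < nn x) ∧ (∀ x, ((nn x : ℤ) • x = (1:ℚ) ⊗ₜ[ℤ] mm x)) := by
    choose nn mm h1 h2 using fun x : ℚ ⊗[ℤ] M => rsq_exists_rep x
    exact ⟨nn, mm, h1, h2⟩
  have hnnR : ∀ x, (0:ℝ) < (nn x : ℝ) := fun x => by exact_mod_cast hnn x
  set ν' : ℚ ⊗[ℤ] M → ℝ := fun x => ν (mm x) / (nn x) with hν'def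
  -- value on any representation
  have hcancelR : ∀ {k : ℕ} {x : ℚ ⊗[ℤ] M} {w : M}, (k:ℤ) • x = (1:ℚ) ⊗ₜ[ℤ] w →
      (k : ℝ) * ν (mm x) = (nn x : ℝ) * ν w := by
    intro k x w hkw
    have hc := congrArg ν (rsq_cancel htf (hmm x) hkw)
    rw [hνsmul, hνsmul] at hc
    rw [Int.cast_natCast, Int.cast_natCast, abs_of_nonneg (by positivity),
      abs_of_nonneg (by positivity)] at hc
    exact hc
  have hrep : ∀ {k : ℕ} {x : ℚ ⊗[ℤ] M} {w : M}, 0 < k →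
      (k:ℤ) • x = (1:ℚ) ⊗ₜ[ℤ] w → ν' x = ν w / k := by
    intro k x w hk hkw
    have hkR : (0:ℝ) < (k:ℝ) := by exact_mod_cast hk
    have := hcancelR hkw
    rw [hν'def]
    rw [div_eq_div_iff (hnnR x).ne' hkR.ne']
    linarith
  -- ν' satisfies the three properties
  have hP3 : ∀ m0 : M, ν' ((1:ℚ) ⊗ₜ[ℤ] m0) = ν m0 := by
    intro m0
    rw [hrep one_pos (by rw [Nat.cast_one, one_smul])]
    simp
  have hP2 : ∀ (z : ℤ) (x : ℚ ⊗[ℤ] M), ν' (z • x) = |(z:ℝ)| * ν' x := by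
    intro z x
    have e : ((nn x : ℤ)) • (z • x) = (1:ℚ) ⊗ₜ[ℤ] (z • mm x) := by
      rw [smul_comm, hmm x, tmul_smul]
    rw [hrep (hnn x) e, hνsmul, hν'def]
    ring
  have hP1 : ∀ x y : ℚ ⊗[ℤ] M, ν' (x + y) ≤ ν' x + ν' y := by
    intro x y
    have e := rsq_add_rep (hmm x) (hmm y)
    rw [hrep (Nat.mul_pos (hnn x) (hnn y)) e]
    have hb : ν ((nn y:ℤ) • mm x + (nn x:ℤ) • mm y) ≤
        (nn y : ℝ) * ν (mm x) + (nn x : ℝ) * ν (mm y) := by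
      calc ν ((nn y:ℤ) • mm x + (nn x:ℤ) • mm y)
          ≤ ν ((nn y:ℤ) • mm x) + ν ((nn x:ℤ) • mm y) := hνadd _ _
        _ = (nn y : ℝ) * ν (mm x) + (nn x : ℝ) * ν (mm y) := by
            rw [hνsmul, hνsmul, Int.cast_natCast, Int.cast_natCast,
              abs_of_nonneg (by positivity), abs_of_nonneg (by positivity)]
    rw [hν'def]
    have hxp := hnnR x
    have hyp := hnnR y
    rw [div_add_div _ _ hxp.ne' hyp.ne', div_le_div_iff₀ (by exact_mod_cast Nat.mul_pos (hnn x) (hnn y)) (mul_pos hxp hyp)]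
    push_cast
    nlinarith [hb, mul_pos hxp hyp]
  -- uniqueness of ν'
  have huniq : ∀ ν'' : ℚ ⊗[ℤ] M → ℝ,
      ((∀ u v, ν'' (u + v) ≤ ν'' u + ν'' v) ∧
       (∀ (z : ℤ) u, ν'' (z • u) = |(z:ℝ)| * ν'' u) ∧
       (∀ m0 : M, ν'' ((1:ℚ) ⊗ₜ[ℤ] m0) = ν m0)) → ν'' = ν' := by
    intro ν'' ⟨_, h2, h3⟩
    funext x
    have := h2 (nn x) x
    rw [hmm x, h3] at this
    rw [Int.cast_natCast, abs_of_nonneg (by positivity)] at this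
    rw [hν'def]
    dsimp only
    rw [this, mul_comm, mul_div_assoc, div_self (hnnR x).ne', mul_one]
  constructor
  · exact ⟨ν', ⟨hP1, hP2, hP3⟩, fun ν'' h => huniq ν'' h⟩
  · intro ν'' h''
    have hν''eq : ν'' = ν' := huniq ν'' h''
    subst hν''eq
    constructor
    · -- explicit formula
      intro q m0
      have := hrep q.pos (rsq_tmul_rep q m0)
      rw [this, hνsmul]
      rw [Rat.cast_def, abs_div, abs_of_nonneg (by positivity : (0:ℝ) ≤ (q.den:ℝ))]
      push_cast
      ring
    · -- dual isomorphism
      intro f c hc hfb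
      have hFcancel : ∀ {k : ℕ} {x : ℚ ⊗[ℤ] M} {w : M},
          (k:ℤ) • x = (1:ℚ) ⊗ₜ[ℤ] w → (k : ℝ) * f (mm x) = (nn x : ℝ) * f w := by
        intro k x w hkw
        have hc' := congrArg f (rsq_cancel htf (hmm x) hkw)
        rw [map_zsmul, map_zsmul] at hc'
        push_cast at hc'
        simpa [zsmul_eq_mul] using hc'
      set F0 : ℚ ⊗[ℤ] M → ℝ := fun x => f (mm x) / (nn x) with hF0def
      have hFrep : ∀ {k : ℕ} {x : ℚ ⊗[ℤ] M} {w : M}, 0 < k →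
          (k:ℤ) • x = (1:ℚ) ⊗ₜ[ℤ] w → F0 x = f w / k := by
        intro k x w hk hkw
        have hkR : (0:ℝ) < (k:ℝ) := by exact_mod_cast hk
        have := hFcancel hkw
        rw [hF0def, div_eq_div_iff (hnnR x).ne' hkR.ne']
        linarith
      have hFadd : ∀ x y, F0 (x + y) = F0 x + F0 y := by
        intro x y
        have e := rsq_add_rep (hmm x) (hmm y)
        rw [hFrep (Nat.mul_pos (hnn x) (hnn y)) e, map_add, map_zsmul, map_zsmul]
        have hxp := hnnR x
        have hyp := hnnR y
        rw [hF0def]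
        push_cast
        field_simp
        simp only [zsmul_eq_mul, Int.cast_natCast]
      refine ⟨AddMonoidHom.mk' F0 hFadd, ?_, ?_, ?_⟩
      · intro m0
        have : F0 ((1:ℚ) ⊗ₜ[ℤ] m0) = f m0 / ((1:ℕ):ℝ) :=
          hFrep one_pos (by rw [Nat.cast_one, one_smul])
        simpa using this
      · intro x
        simp only [AddMonoidHom.mk'_apply, hF0def, hν'def]
        rw [abs_div, abs_of_nonneg (by positivity : (0:ℝ) ≤ (nn x:ℝ))]
        rw [div_le_iff₀ (hnnR x)]
        have := hfb (mm x)
        calc |f (mm x)| ≤ c * ν (mm x) := this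
          _ = c * (ν (mm x) / (nn x)) * (nn x) := by
              rw [mul_assoc, div_mul_cancel₀ _ (hnnR x).ne']
      · intro F' hF'
        ext x
        have h1 : ((nn x : ℤ)) • F' x = f (mm x) := by
          rw [← AddMonoidHom.map_zsmul, hmm x, hF']
        have h2 : ((nn x : ℝ)) * F' x = f (mm x) := by
          rw [← h1]; push_cast [zsmul_eq_mul]; ring
        simp only [AddMonoidHom.mk'_apply, hF0def]
        rw [eq_div_iff (hnnR x).ne']
        linarith
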